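/- Let h be a nonvanishing smooth function on Ω, φ a smooth function with φ(p) ≠ λ^i(p) for all i and all p, and set g = φ·h. If L_i g = λ^i L_i h for all i, then φ satisfies, for all i ≠ j: L_i L_j φ = (1/(φ − λ^i) + 1/(φ − λ^j)) L_i φ · L_j φ + (L_j λ^i/(λ^j − λ^i))·((φ − λ^j)/(φ − λ^i))·L_i φ + (L_i λ^j/(λ^i − λ^j))·((φ − λ^i)/(φ − λ^j))·L_j φ + Σ_k c^k_{ij}·((λ^i − λ^k)/(λ^i − λ^j))·((φ − λ^j)/(φ − λ^k))·L_k φ. -/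

import Mathlib

/-- Directional derivative of `w` along the vector field `ξ i`. -/
noncomputable def Lder {n : ℕ} {F : Type*} [NormedAddCommGroup F] [NormedSpace ℝ F]
    (ξ : Fin n → (Fin n → ℝ) → (Fin n → ℝ)) (i : Fin n)
    (w : (Fin n → ℝ) → F) : (Fin n → ℝ) → F :=
  fun p => fderiv ℝ w p (ξ i p)

section helpers
variable {n : ℕ} {Ω : Set (Fin n → ℝ)} {ξ : Fin n → (Fin n → ℝ) → (Fin n → ℝ)}

lemma lderContDiffOn (hΩ : IsOpen Ω) (hξ : ∀ i, ContDiffOn ℝ (⊤ : ℕ∞) (ξ i) Ω) (i : Fin n)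
    {w : (Fin n → ℝ) → ℝ} (hw : ContDiffOn ℝ (⊤ : ℕ∞) w Ω) :
    ContDiffOn ℝ (⊤ : ℕ∞) (Lder ξ i w) Ω := by
  have h1 : ContDiffOn ℝ (⊤ : ℕ∞) (fderiv ℝ w) Ω := hw.fderiv_of_isOpen (m := (⊤:ℕ∞)) hΩ (by exact_mod_cast le_top)
  exact h1.clm_apply (hξ i)

lemma lder_add {f g : (Fin n → ℝ) → ℝ} {p} (l : Fin n) (hf : DifferentiableAt ℝ f p)
    (hg : DifferentiableAt ℝ g p) :
    Lder ξ l (fun q => f q + g q) p = Lder ξ l f p + Lder ξ l g p := by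
  simp [Lder, fderiv_fun_add hf hg]

lemma lder_sub {f g : (Fin n → ℝ) → ℝ} {p} (l : Fin n) (hf : DifferentiableAt ℝ f p)
    (hg : DifferentiableAt ℝ g p) :
    Lder ξ l (fun q => f q - g q) p = Lder ξ l f p - Lder ξ l g p := by
  simp [Lder, fderiv_fun_sub hf hg]

lemma lder_mul {f g : (Fin n → ℝ) → ℝ} {p} (l : Fin n) (hf : DifferentiableAt ℝ f p)
    (hg : DifferentiableAt ℝ g p) :
    Lder ξ l (fun q => f q * g q) p = f p * Lder ξ l g p + g p * Lder ξ l f p := by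
  simp [Lder, fderiv_fun_mul hf hg]

lemma lder_comm (hΩ : IsOpen Ω) (hξ : ∀ i, ContDiffOn ℝ (⊤ : ℕ∞) (ξ i) Ω)
    {c : Fin n → Fin n → Fin n → (Fin n → ℝ) → ℝ} {i j : Fin n} {p : Fin n → ℝ} (hp : p ∈ Ω)
    (hcp : fderiv ℝ (ξ j) p (ξ i p) - fderiv ℝ (ξ i) p (ξ j p) = ∑ k, c i j k p • ξ k p)
    {w : (Fin n → ℝ) → ℝ} (hw : ContDiffOn ℝ (⊤ : ℕ∞) w Ω) :
    Lder ξ i (Lder ξ j w) p - Lder ξ j (Lder ξ i w) p = ∑ k, c i j k p * Lder ξ k w p := by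
  have hmem := hΩ.mem_nhds hp
  have hf' : DifferentiableAt ℝ (fderiv ℝ w) p :=
    (((hw.fderiv_of_isOpen (m := (⊤:ℕ∞)) hΩ (by exact_mod_cast le_top)).contDiffAt hmem).differentiableAt (by simp))
  have hξi : DifferentiableAt ℝ (ξ i) p :=
    ((hξ i).contDiffAt hmem).differentiableAt (by simp)
  have hξj : DifferentiableAt ℝ (ξ j) p :=
    ((hξ j).contDiffAt hmem).differentiableAt (by simp)
  have hev : ∀ᶠ q in nhds p, HasFDerivAt w (fderiv ℝ w q) q := by
    filter_upwards [hΩ.mem_nhds hp] with q hq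
    exact ((hw.contDiffAt (hΩ.mem_nhds hq)).differentiableAt (by simp)).hasFDerivAt
  have hsym : ∀ v u, fderiv ℝ (fderiv ℝ w) p v u = fderiv ℝ (fderiv ℝ w) p u v :=
    second_derivative_symmetric_of_eventually hev hf'.hasFDerivAt
  have e1 : Lder ξ i (Lder ξ j w) p
      = fderiv ℝ w p (fderiv ℝ (ξ j) p (ξ i p)) + fderiv ℝ (fderiv ℝ w) p (ξ i p) (ξ j p) := by
    show fderiv ℝ (fun q => (fderiv ℝ w q) (ξ j q)) p (ξ i p) = _
    rw [fderiv_clm_apply hf' hξj]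
    simp
  have e2 : Lder ξ j (Lder ξ i w) p
      = fderiv ℝ w p (fderiv ℝ (ξ i) p (ξ j p)) + fderiv ℝ (fderiv ℝ w) p (ξ j p) (ξ i p) := by
    show fderiv ℝ (fun q => (fderiv ℝ w q) (ξ i q)) p (ξ j p) = _
    rw [fderiv_clm_apply hf' hξi]
    simp
  rw [e1, e2, hsym (ξ i p) (ξ j p)]
  have : fderiv ℝ w p (fderiv ℝ (ξ j) p (ξ i p)) - fderiv ℝ w p (fderiv ℝ (ξ i) p (ξ j p))
      = fderiv ℝ w p (∑ k, c i j k p • ξ k p) := by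
    rw [← map_sub, hcp]
  rw [show ∀ a b x : ℝ, a + x - (b + x) = a - b from by intros; ring, this]
  simp [Lder]
end helpers

/-- if `h` is nonvanishing, `φ ≠ λ^i`, `g = φ·h` and `L_i g = λ^i L_i h`,
then `φ` satisfies the nonlinear second-order system (5). -/
theorem stmt1 {n : ℕ} (Ω : Set (Fin n → ℝ)) (hΩ : IsOpen Ω)
    (ξ : Fin n → (Fin n → ℝ) → (Fin n → ℝ))
    (hξ : ∀ i, ContDiffOn ℝ (⊤ : ℕ∞) (ξ i) Ω)
    (hind : ∀ p ∈ Ω, LinearIndependent ℝ (fun i => ξ i p))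
    (c : Fin n → Fin n → Fin n → (Fin n → ℝ) → ℝ)
    (hc : ∀ i j, ∀ p ∈ Ω,
      fderiv ℝ (ξ j) p (ξ i p) - fderiv ℝ (ξ i) p (ξ j p) = ∑ k, c i j k p • ξ k p)
    (lam : Fin n → (Fin n → ℝ) → ℝ)
    (hlam : ∀ i, ContDiffOn ℝ (⊤ : ℕ∞) (lam i) Ω)
    (hdist : ∀ i j, i ≠ j → ∀ p ∈ Ω, lam i p ≠ lam j p)
    (h φ : (Fin n → ℝ) → ℝ)
    (hh : ContDiffOn ℝ (⊤ : ℕ∞) h Ω) (hφ : ContDiffOn ℝ (⊤ : ℕ∞) φ Ω)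
    (hh0 : ∀ p ∈ Ω, h p ≠ 0)
    (hφlam : ∀ i, ∀ p ∈ Ω, φ p ≠ lam i p)
    (hcl : ∀ i, ∀ p ∈ Ω,
      Lder ξ i (fun q => φ q * h q) p = lam i p * Lder ξ i h p) :
    ∀ i j, i ≠ j → ∀ p ∈ Ω,
      Lder ξ i (Lder ξ j φ) p
        = (1 / (φ p - lam i p) + 1 / (φ p - lam j p)) * (Lder ξ i φ p * Lder ξ j φ p)
          + (Lder ξ j (lam i) p / (lam j p - lam i p))
            * ((φ p - lam j p) / (φ p - lam i p)) * Lder ξ i φ p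
          + (Lder ξ i (lam j) p / (lam i p - lam j p))
            * ((φ p - lam i p) / (φ p - lam j p)) * Lder ξ j φ p
          + ∑ k, c i j k p * ((lam i p - lam k p) / (lam i p - lam j p))
            * ((φ p - lam j p) / (φ p - lam k p)) * Lder ξ k φ p := by
  intro i j hij p hp
  have hmem : Ω ∈ nhds p := hΩ.mem_nhds hp
  have hdiff : ∀ (w : (Fin n → ℝ) → ℝ), ContDiffOn ℝ (⊤ : ℕ∞) w Ω →
      ∀ q ∈ Ω, DifferentiableAt ℝ w q := fun w hw q hq =>
    ((hw.contDiffAt (hΩ.mem_nhds hq)).differentiableAt (by simp))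
  have dφ : DifferentiableAt ℝ φ p := hdiff φ hφ p hp
  have dh : DifferentiableAt ℝ h p := hdiff h hh p hp
  have dlami : DifferentiableAt ℝ (lam i) p := hdiff (lam i) (hlam i) p hp
  have dlamj : DifferentiableAt ℝ (lam j) p := hdiff (lam j) (hlam j) p hp
  have dLih : DifferentiableAt ℝ (Lder ξ i h) p :=
    hdiff _ (lderContDiffOn hΩ hξ i hh) p hp
  have dLjh : DifferentiableAt ℝ (Lder ξ j h) p :=
    hdiff _ (lderContDiffOn hΩ hξ j hh) p hp
  have dLiφ : DifferentiableAt ℝ (Lder ξ i φ) p :=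
    hdiff _ (lderContDiffOn hΩ hξ i hφ) p hp
  have dLjφ : DifferentiableAt ℝ (Lder ξ j φ) p :=
    hdiff _ (lderContDiffOn hΩ hξ j hφ) p hp
  -- nonvanishing
  have Hne : h p ≠ 0 := hh0 p hp
  have aine : φ p - lam i p ≠ 0 := sub_ne_zero.mpr (hφlam i p hp)
  have ajne : φ p - lam j p ≠ 0 := sub_ne_zero.mpr (hφlam j p hp)
  have akne : ∀ k, φ p - lam k p ≠ 0 := fun k => sub_ne_zero.mpr (hφlam k p hp)
  have lijne : lam i p - lam j p ≠ 0 := sub_ne_zero.mpr (hdist i j hij p hp)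
  have ljine : lam j p - lam i p ≠ 0 := sub_ne_zero.mpr (hdist j i (Ne.symm hij) p hp)
  -- Fact 1: (φ - λ^k) L_k h + h L_k φ = 0 on Ω
  have fact1 : ∀ k, ∀ q ∈ Ω, (φ q - lam k q) * Lder ξ k h q + h q * Lder ξ k φ q = 0 := by
    intro k q hq
    have e := hcl k q hq
    rw [lder_mul k (hdiff φ hφ q hq) (hdiff h hh q hq)] at e
    linear_combination e
  -- E1 and E2: derivative of fact1 along ξ j resp. ξ i
  have Ederiv : ∀ a b : Fin n,
      (Lder ξ b φ p - Lder ξ b (lam a) p) * Lder ξ a h p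
        + (φ p - lam a p) * Lder ξ b (Lder ξ a h) p
        + Lder ξ b h p * Lder ξ a φ p + h p * Lder ξ b (Lder ξ a φ) p = 0 := by
    intro a b
    have dLah : DifferentiableAt ℝ (Lder ξ a h) p :=
      hdiff _ (lderContDiffOn hΩ hξ a hh) p hp
    have dLaφ : DifferentiableAt ℝ (Lder ξ a φ) p :=
      hdiff _ (lderContDiffOn hΩ hξ a hφ) p hp
    have dlama : DifferentiableAt ℝ (lam a) p := hdiff (lam a) (hlam a) p hp
    have hZ : (fun q => (φ q - lam a q) * Lder ξ a h q + h q * Lder ξ a φ q)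
        =ᶠ[nhds p] (fun _ => (0:ℝ)) := by
      filter_upwards [hmem] with q hq
      exact fact1 a q hq
    have h0 : Lder ξ b (fun q => (φ q - lam a q) * Lder ξ a h q + h q * Lder ξ a φ q) p = 0 := by
      show fderiv ℝ _ p (ξ b p) = 0
      rw [hZ.fderiv_eq]
      simp
    rw [lder_add (f := fun q => (φ q - lam a q) * Lder ξ a h q) (g := fun q => h q * Lder ξ a φ q) b ((dφ.sub dlama).mul dLah) (dh.mul dLaφ),
        lder_mul (f := fun q => φ q - lam a q) b (dφ.sub dlama) dLah, lder_mul b dh dLaφ,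
        lder_sub b dφ dlama] at h0
    linear_combination h0
  have E1 := Ederiv i j
  have E2 := Ederiv j i
  have E3 : Lder ξ i (Lder ξ j h) p - Lder ξ j (Lder ξ i h) p
      = ∑ k, c i j k p * Lder ξ k h p := lder_comm hΩ hξ hp (hc i j p hp) hh
  have E4 : Lder ξ i (Lder ξ j φ) p - Lder ξ j (Lder ξ i φ) p
      = ∑ k, c i j k p * Lder ξ k φ p := lder_comm hΩ hξ hp (hc i j p hp) hφ
  -- the key polynomial identity
  have G : (φ p - lam i p) * (φ p - lam j p) * h p * (lam i p - lam j p)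
        * Lder ξ i (Lder ξ j φ) p
      = h p * ((φ p - lam j p)^2 * (Lder ξ j φ p - Lder ξ j (lam i) p) * Lder ξ i φ p
            - (φ p - lam i p)^2 * (Lder ξ i φ p - Lder ξ i (lam j) p) * Lder ξ j φ p)
        + (φ p - lam i p)^2 * (φ p - lam j p)^2 * (∑ k, c i j k p * Lder ξ k h p)
        + (φ p - lam i p) * (φ p - lam j p)^2 * h p * (∑ k, c i j k p * Lder ξ k φ p) := by
    linear_combination ((φ p - lam i p) * (φ p - lam j p))
        * ((φ p - lam i p) * (φ p - lam j p) * E3 - (φ p - lam i p) * E2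
          + (φ p - lam j p) * E1 + (φ p - lam j p) * h p * E4)
      - ((φ p - lam j p) * ((φ p - lam j p) * (Lder ξ j φ p - Lder ξ j (lam i) p)
          - (φ p - lam i p) * Lder ξ j φ p)) * fact1 i p hp
      - ((φ p - lam i p) * ((φ p - lam j p) * Lder ξ i φ p
          - (φ p - lam i p) * (Lder ξ i φ p - Lder ξ i (lam j) p))) * fact1 j p hp
  have Dne : (φ p - lam i p) * (φ p - lam j p) * h p * (lam i p - lam j p) ≠ 0 :=
    mul_ne_zero (mul_ne_zero (mul_ne_zero aine ajne) Hne) lijne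
  -- rewrite each summand of the goal sum
  have perterm : ∀ k, c i j k p * ((lam i p - lam k p) / (lam i p - lam j p))
        * ((φ p - lam j p) / (φ p - lam k p)) * Lder ξ k φ p
      = ((φ p - lam i p)^2 * (φ p - lam j p)^2 * (c i j k p * Lder ξ k h p)
          + (φ p - lam i p) * (φ p - lam j p)^2 * h p * (c i j k p * Lder ξ k φ p))
        / ((φ p - lam i p) * (φ p - lam j p) * h p * (lam i p - lam j p)) := by
    intro k
    have step1 : c i j k p * ((lam i p - lam k p) / (lam i p - lam j p))
          * ((φ p - lam j p) / (φ p - lam k p)) * Lder ξ k φ p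
        = (c i j k p * (lam i p - lam k p) * (φ p - lam j p) * Lder ξ k φ p)
          / ((lam i p - lam j p) * (φ p - lam k p)) := by
      rw [eq_div_iff (mul_ne_zero lijne (akne k))]
      field_simp
      rw [mul_assoc _ (φ p - lam k p), mul_div_assoc, mul_div_cancel_left₀ _ (akne k)]
    rw [step1, div_eq_div_iff (mul_ne_zero lijne (akne k)) Dne]
    linear_combination (-(c i j k p) * (φ p - lam i p)^2 * (φ p - lam j p)^2
        * (lam i p - lam j p)) * fact1 k p hp
  have hsum : (∑ k, c i j k p * ((lam i p - lam k p) / (lam i p - lam j p))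
        * ((φ p - lam j p) / (φ p - lam k p)) * Lder ξ k φ p)
      = ((φ p - lam i p)^2 * (φ p - lam j p)^2 * (∑ k, c i j k p * Lder ξ k h p)
          + (φ p - lam i p) * (φ p - lam j p)^2 * h p * (∑ k, c i j k p * Lder ξ k φ p))
        / ((φ p - lam i p) * (φ p - lam j p) * h p * (lam i p - lam j p)) := by
    rw [Finset.sum_congr rfl fun k _ => perterm k, ← Finset.sum_div,
        Finset.sum_add_distrib, ← Finset.mul_sum, ← Finset.mul_sum]
  have hX : Lder ξ i (Lder ξ j φ) p
      = (h p * ((φ p - lam j p)^2 * (Lder ξ j φ p - Lder ξ j (lam i) p) * Lder ξ i φ p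
            - (φ p - lam i p)^2 * (Lder ξ i φ p - Lder ξ i (lam j) p) * Lder ξ j φ p)
        + (φ p - lam i p)^2 * (φ p - lam j p)^2 * (∑ k, c i j k p * Lder ξ k h p)
        + (φ p - lam i p) * (φ p - lam j p)^2 * h p * (∑ k, c i j k p * Lder ξ k φ p))
        / ((φ p - lam i p) * (φ p - lam j p) * h p * (lam i p - lam j p)) := by
    rw [eq_div_iff Dne]
    linear_combination G
  rw [hX, hsum]
  field_simp
  ring
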